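/- The primorial constant P := Σ_{n=1}^∞ (−1)^{n−1} / (p_1 p_2 ⋯ p_n) = 1/2 − 1/6 + 1/30 − 1/210 + 1/2310 − ⋯, where p_n denotes the n-th prime and p_1 p_2 ⋯ p_n = p_n# is the primorial, is irrational. -/

import Mathlib

set_option maxHeartbeats 1000000

open Finset


noncomputable def pq (n : ℕ) : ℕ := ∏ i ∈ Finset.range (n+1), Nat.nth Nat.Prime i

lemma pq_pos (n : ℕ) : 0 < pq n :=
  Finset.prod_pos fun i _ => (Nat.prime_nth_prime i).pos

lemma pq_succ (n : ℕ) : pq (n+1) = pq n * Nat.nth Nat.Prime (n+1) :=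
  Finset.prod_range_succ _ _

lemma pq_dvd {m n : ℕ} (h : m ≤ n) : pq m ∣ pq n :=
  Finset.prod_dvd_prod_of_subset _ _ _ (Finset.range_subset_range.2 (by omega))

lemma pq_mul_le (m i : ℕ) : pq m * 2 ^ i ≤ pq (i + m) := by
  induction i with
  | zero => simp
  | succ i ih =>
    have h2 : pq (i + m) * 2 ≤ pq (i + m) * Nat.nth Nat.Prime (i + m + 1) :=
      Nat.mul_le_mul_left _ (Nat.prime_nth_prime _).two_le
    calc pq m * 2 ^ (i+1) = pq m * 2 ^ i * 2 := by ring
      _ ≤ pq (i + m) * 2 := Nat.mul_le_mul_right _ ih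
      _ ≤ pq (i + m) * Nat.nth Nat.Prime (i + m + 1) := h2
      _ = pq (i + 1 + m) := by rw [show i + 1 + m = (i + m) + 1 by ring, pq_succ]

noncomputable def fP (n : ℕ) : ℝ := (-1 : ℝ) ^ n / pq n

lemma abs_fP (n : ℕ) : |fP n| = 1 / pq n := by
  rw [fP, abs_div, abs_pow, abs_neg, abs_one, one_pow, abs_of_nonneg]
  positivity

lemma abs_fP_add_le (m i : ℕ) : |fP (i + m)| ≤ (1 / pq m : ℝ) * (1/2) ^ i := by
  rw [abs_fP]
  have h : (pq m : ℝ) * 2 ^ i ≤ pq (i + m) := by exact_mod_cast pq_mul_le m i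
  have h1 : (1:ℝ) / pq (i + m) ≤ 1 / ((pq m : ℝ) * 2 ^ i) := by
    apply one_div_le_one_div_of_le _ h
    have := pq_pos m
    positivity
  calc (1:ℝ) / pq (i + m) ≤ 1 / ((pq m : ℝ) * 2 ^ i) := h1
    _ = (1 / pq m : ℝ) * (1/2) ^ i := by rw [div_pow, one_pow, div_mul_div_comm, one_mul]

lemma summable_geom_half : Summable (fun i : ℕ => ((1:ℝ)/2) ^ i) :=
  summable_geometric_of_lt_one (by norm_num) (by norm_num)

lemma summable_abs_fP_add (m : ℕ) : Summable (fun i => |fP (i + m)|) :=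
  Summable.of_nonneg_of_le (fun i => abs_nonneg _) (abs_fP_add_le m)
    (summable_geom_half.mul_left _)

lemma summable_fP : Summable fP := by
  have h := (summable_abs_fP_add 0).of_abs
  simpa using h

lemma tail_bound (m : ℕ) : ∑' i, |fP (i + m)| ≤ 2 / pq m := by
  calc ∑' i, |fP (i + m)| ≤ ∑' i : ℕ, (1 / pq m : ℝ) * (1/2) ^ i :=
        Summable.tsum_le_tsum (abs_fP_add_le m) (summable_abs_fP_add m) (summable_geom_half.mul_left _)
    _ = (1 / pq m : ℝ) * ∑' i : ℕ, ((1:ℝ)/2) ^ i := tsum_mul_left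
    _ = 2 / pq m := by
        rw [tsum_geometric_of_lt_one (by norm_num) (by norm_num)]
        norm_num
        ring

lemma abs_tsum_tail_le (m : ℕ) : |∑' i, fP (i + m)| ≤ 2 / pq m := by
  refine le_trans ?_ (tail_bound m)
  have := norm_tsum_le_tsum_norm (f := fun i => fP (i + m)) ?_
  · simpa [Real.norm_eq_abs] using this
  · simpa [Real.norm_eq_abs] using summable_abs_fP_add m


/-- The primorial constant `P = ∑_{n≥1} (-1)^(n-1) / (p_1 p_2 ⋯ p_n)` is irrational,
where `p_i` is the `i`-th prime (here `Nat.nth Nat.Prime i` is the `(i+1)`-st prime). -/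
theorem stmt_9 :
    Irrational (∑' n : ℕ, (-1 : ℝ) ^ n / ∏ i ∈ Finset.range (n + 1), (Nat.nth Nat.Prime i : ℝ)) := by
  have hfeq : ∀ n : ℕ, (-1 : ℝ) ^ n / ∏ i ∈ Finset.range (n + 1), (Nat.nth Nat.Prime i : ℝ) = fP n := by
    intro n
    rw [fP, pq]
    push_cast
    ring
  rw [tsum_congr hfeq]
  rintro ⟨r, hr⟩
  obtain ⟨b, a, hb, hbr⟩ : ∃ (b : ℕ) (a : ℤ), 0 < b ∧ (b : ℝ) * (r : ℝ) = a :=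
    ⟨r.den, r.num, r.pos, by rw [Rat.cast_def]; field_simp⟩
  obtain ⟨N, hp1, hp2⟩ : ∃ N : ℕ, 2 * b + 3 ≤ Nat.nth Nat.Prime (N+1) ∧
      4 ≤ Nat.nth Nat.Prime (N+2) :=
    ⟨2 * b, by have := Nat.add_two_le_nth_prime (2*b+1); omega,
      by have := Nat.add_two_le_nth_prime (2*b+2); omega⟩
  set p₁ : ℕ := Nat.nth Nat.Prime (N+1) with hp1def
  set p₂ : ℕ := Nat.nth Nat.Prime (N+2) with hp2def
  have hx : (1:ℝ) ≤ pq N := by exact_mod_cast pq_pos N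
  have hxpos : (0:ℝ) < pq N := by linarith
  have hp1R : (2 * b + 3 : ℝ) ≤ p₁ := by exact_mod_cast hp1
  have hp2R : (4:ℝ) ≤ p₂ := by exact_mod_cast hp2
  have hbR : (1:ℝ) ≤ b := by exact_mod_cast hb
  have hp1pos : (0:ℝ) < p₁ := by linarith
  have hp2pos : (0:ℝ) < p₂ := by linarith
  have e1 : (pq (N+1) : ℝ) = pq N * p₁ := by exact_mod_cast congrArg (Nat.cast (R := ℝ)) (pq_succ N)
  have e2 : (pq (N+2) : ℝ) = pq N * p₁ * p₂ := by
    have h := pq_succ (N+1)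
    rw [show (N+1)+1 = N+2 from rfl] at h
    rw [h]
    push_cast [e1]
    ring
  clear_value p₁ p₂
  -- split the sum
  set S : ℝ := ∑ n ∈ Finset.range (N+1), fP n with hSdef
  set T : ℝ := ∑' i, fP (i + (N+1)) with hTdef
  have hsplit : (r : ℝ) = S + T := by
    rw [hr]
    exact (Summable.sum_add_tsum_nat_add (N+1) summable_fP).symm
  set T' : ℝ := ∑' i, fP (i + (N+2)) with hT'def
  have hT' : |T'| ≤ 2 / pq (N+2) := abs_tsum_tail_le (N+2)
  have hTsplit : T = fP (N+1) + T' := by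
    rw [hTdef, Summable.tsum_eq_zero_add ((summable_nat_add_iff (N+1)).2 summable_fP)]
    congr 1
    · norm_num
    · rw [hT'def]
      exact tsum_congr fun i => by congr 1; omega
  clear_value T T' S
  -- upper bound for |T|
  have hTub : |T| ≤ 1 / pq (N+1) + 2 / pq (N+2) := by
    rw [hTsplit]
    calc |fP (N+1) + T'| ≤ |fP (N+1)| + |T'| := abs_add_le _ _
      _ ≤ 1 / pq (N+1) + 2 / pq (N+2) := by rw [abs_fP]; linarith
  -- T ≠ 0
  have hTlb : 1 / pq (N+1) - 2 / pq (N+2) ≤ |T| := by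
    have h1 : |fP (N+1)| ≤ |T| + |T'| := by
      rw [hTsplit]
      calc |fP (N+1)| = |(fP (N+1) + T') - T'| := by ring_nf
        _ ≤ |fP (N+1) + T'| + |T'| := abs_sub _ _
    rw [abs_fP] at h1
    linarith
  have hTne : T ≠ 0 := by
    intro h0
    rw [h0, abs_zero, e1, e2] at hTlb
    have h5 : 2 / ((pq N : ℝ) * p₁ * p₂) < 1 / ((pq N : ℝ) * p₁) := by
      rw [div_lt_div_iff₀ (by positivity) (by positivity)]
      nlinarith
    linarith
  -- the integer from the partial sum
  obtain ⟨zS, hzS⟩ : ∃ zS : ℤ, (pq N : ℝ) * S = zS := by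
    refine ⟨∑ n ∈ Finset.range (N+1), (-1:ℤ)^n * (pq N / pq n : ℕ), ?_⟩
    rw [hSdef, Finset.mul_sum, Int.cast_sum]
    apply Finset.sum_congr rfl
    intro n hn
    have hdvd : pq n ∣ pq N := pq_dvd (by simp at hn; omega)
    have hpn : (pq n : ℝ) ≠ 0 := by have := pq_pos n; positivity
    rw [Int.cast_mul, Int.cast_pow, Int.cast_neg, Int.cast_one, Int.cast_natCast,
      Nat.cast_div hdvd hpn, fP]
    field_simp
  -- c := b * pq N * T equals an integer
  have hc : ((a * pq N - b * zS : ℤ) : ℝ) = (b : ℝ) * ((pq N : ℝ) * T) := by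
    push_cast
    have hTeq : T = (r:ℝ) - S := by linarith [hsplit]
    rw [hTeq, ← hzS]
    linear_combination (-(pq N : ℝ)) * hbr
  set z : ℤ := a * pq N - b * zS with hzdef
  clear_value z
  have hbne : (b:ℝ) ≠ 0 := by linarith
  have hzne : z ≠ 0 := by
    intro h0
    rw [h0, Int.cast_zero] at hc
    have : (pq N : ℝ) * T = 0 := by
      rcases mul_eq_zero.mp hc.symm with h | h
      · exact absurd h hbne
      · exact h
    rcases mul_eq_zero.mp this with h | h
    · exact absurd h hxpos.ne'
    · exact hTne h
  have hzlt : |(z : ℝ)| < 1 := by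
    rw [hc, abs_mul, abs_mul, abs_of_nonneg (by positivity : (0:ℝ) ≤ (b:ℝ)),
      abs_of_nonneg hxpos.le]
    have hub2 : |T| ≤ 1 / ((pq N : ℝ) * p₁) + 2 / ((pq N : ℝ) * p₁ * p₂) := by
      rw [← e2, ← e1]; exact hTub
    calc (b:ℝ) * ((pq N : ℝ) * |T|)
        ≤ (b:ℝ) * ((pq N : ℝ) * (1 / ((pq N : ℝ) * p₁) + 2 / ((pq N : ℝ) * p₁ * p₂))) := by
          apply mul_le_mul_of_nonneg_left _ (by positivity)
          exact mul_le_mul_of_nonneg_left hub2 hxpos.le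
      _ = (b:ℝ) / p₁ + 2 * b / (p₁ * p₂) := by field_simp
      _ ≤ (b:ℝ) / p₁ + (b:ℝ) / p₁ := by
          have h6 : 2 * (b:ℝ) / (p₁ * p₂) ≤ (b:ℝ) / p₁ := by
            rw [div_le_div_iff₀ (by positivity) hp1pos]
            have h7 : ((b:ℝ) * p₁) * 4 ≤ ((b:ℝ) * p₁) * p₂ :=
              mul_le_mul_of_nonneg_left hp2R (by positivity)
            have h8 : (0:ℝ) ≤ (b:ℝ) * p₁ := by positivity
            linarith [h7, h8]
          linarith
      _ = 2 * b / p₁ := by ring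
      _ < 1 := by
          rw [div_lt_one hp1pos]
          linarith
  have hge : (1:ℝ) ≤ |(z:ℝ)| := by
    rw [← Int.cast_abs]
    exact_mod_cast Int.one_le_abs hzne
  linarith
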